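/- (i) The actions ℕ ↷_θ ℕ*_∞ and ℕ* ↷_ρ ℕ*_∞ are orbit equivalent (indeed the identity map of ℕ*_∞ implements an orbit equivalence, since for both actions the orbit of each k ∈ ℕ* is ℕ* and the orbit of ∞ is {∞}), but they are NOT continuously orbit equivalent. (ii) The actions ℕ ↷_θ ℕ_∞ and ℕ* ↷_ρ ℕ_∞ are not orbit equivalent. -/

import Mathlib

/-- Multiplicative `Q_x` for a subsemigroup `P` of a group `G`. -/
def Qset {G X : Type*} [Group G] (P : Set G) (θ : G → X → X) (x : X) : Set G :=
  {g : G | ∃ a ∈ P, ∃ b ∈ P, ∃ y : X, g = a * b⁻¹ ∧ θ a x = θ b y}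

/-- Additive `Q_x` for a subsemigroup `P` of `ℤ`. -/
def QsetZ {X : Type*} (P : Set ℤ) (θ : ℤ → X → X) (x : X) : Set ℤ :=
  {g : ℤ | ∃ a ∈ P, ∃ b ∈ P, ∃ y : X, g = a - b ∧ θ a x = θ b y}

/-- The multiplicative group `ℚ_{>0}` of positive rationals (with the discrete
topology). -/
def QPos : Type := {q : ℚ // 0 < q}

instance : Group QPos := inferInstanceAs (Group {q : ℚ // 0 < q})
instance : TopologicalSpace QPos := ⊥
instance : DiscreteTopology QPos := ⟨rfl⟩

/-- The underlying rational of an element of `ℚ_{>0}`. -/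
def QPos.val (q : QPos) : ℚ := Subtype.val q

/-- `ℕ ⊆ ℤ`, the additive subsemigroup of natural numbers. -/
def Pint : Set ℤ := {g : ℤ | 0 ≤ g}

/-- `ℕ* ⊆ ℚ_{>0}`, the multiplicative subsemigroup of positive integers. -/
def PposInt : Set QPos := {q : QPos | ∃ m : ℕ, q.val = (m : ℚ)}

/-- `ℕ*`, the positive natural numbers. -/
abbrev NStar : Type := {n : ℕ // 0 < n}

/-- `θ_m(n) = n + m`, `θ_m(∞) = ∞` on `ℕ*_∞ = OnePoint ℕ*` (defined for all `m ∈ ℤ`;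
for `m ∈ ℕ` the guard is satisfied and the value is `n + m`). -/
def thetaN (g : ℤ) (x : OnePoint NStar) : OnePoint NStar :=
  Option.elim x OnePoint.infty fun n =>
    if h : 0 < (n.1 : ℤ) + g then OnePoint.some ⟨((n.1 : ℤ) + g).toNat, by omega⟩
    else OnePoint.some n

/-- `ρ_m(n) = n·m`, `ρ_m(∞) = ∞` on `ℕ*_∞` (defined for all `m ∈ ℚ_{>0}`; for
`m ∈ ℕ*` the guard is satisfied and the value is `n·m`). -/
def rhoN (q : QPos) (x : OnePoint NStar) : OnePoint NStar :=
  Option.elim x OnePoint.infty fun n =>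
    if h : (q.val * (n.1 : ℚ)).den = 1 ∧ 0 < (q.val * (n.1 : ℚ)).num
    then OnePoint.some ⟨(q.val * (n.1 : ℚ)).num.toNat, by omega⟩
    else OnePoint.some n

/-- `θ_m(n) = n + m`, `θ_m(∞) = ∞` on `ℕ_∞ = OnePoint ℕ`. -/
def thetaN' (g : ℤ) (x : OnePoint ℕ) : OnePoint ℕ :=
  Option.elim x OnePoint.infty fun n =>
    if 0 ≤ (n : ℤ) + g then OnePoint.some ((n : ℤ) + g).toNat
    else OnePoint.some n

/-- `ρ_m(n) = n·m`, `ρ_m(∞) = ∞` on `ℕ_∞`. -/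
def rhoN' (q : QPos) (x : OnePoint ℕ) : OnePoint ℕ :=
  Option.elim x OnePoint.infty fun n =>
    if (q.val * (n : ℚ)).den = 1 ∧ 0 ≤ (q.val * (n : ℚ)).num
    then OnePoint.some (q.val * (n : ℚ)).num.toNat
    else OnePoint.some n

lemma thetaN_infty (g : ℤ) : thetaN g OnePoint.infty = OnePoint.infty := rfl

lemma thetaN_some (a : ℕ) (n : NStar) :
    thetaN (a : ℤ) (OnePoint.some n) = OnePoint.some ⟨n.1 + a, by have := n.2; omega⟩ := by
  show dite _ _ _ = _
  rw [dif_pos (by exact_mod_cast Nat.add_pos_left n.2 a)]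
  exact congrArg OnePoint.some (Subtype.ext (by show ((n.1:ℤ)+(a:ℤ)).toNat = n.1+a; omega))

lemma thetaN_some_ne (g : ℤ) (n : NStar) : thetaN g (OnePoint.some n) ≠ OnePoint.infty := by
  show dite _ _ _ ≠ _
  split <;> exact fun h => Option.some_ne_none _ h

lemma rhoN_infty (q : QPos) : rhoN q OnePoint.infty = OnePoint.infty := rfl

lemma rhoN_some (r : ℕ) (hr : 0 < r) (q : QPos) (hq : q.val = (r : ℚ)) (n : NStar) :
    rhoN q (OnePoint.some n) = OnePoint.some ⟨r * n.1, Nat.mul_pos hr n.2⟩ := by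
  show dite _ _ _ = _
  have key : q.val * (n.1 : ℚ) = ((r * n.1 : ℕ) : ℚ) := by rw [hq]; push_cast; ring
  rw [dif_pos (by
    rw [key, Rat.den_natCast, Rat.num_natCast]
    exact ⟨rfl, by exact_mod_cast Nat.mul_pos hr n.2⟩)]
  exact congrArg OnePoint.some (Subtype.ext (by
    show (q.val * (n.1:ℚ)).num.toNat = r * n.1
    rw [key, Rat.num_natCast]; push_cast; omega))

lemma rhoN_some_ne (q : QPos) (n : NStar) : rhoN q (OnePoint.some n) ≠ OnePoint.infty := by
  show dite _ _ _ ≠ _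
  split <;> exact fun h => Option.some_ne_none _ h

lemma memPposInt (q : QPos) (hq : q ∈ PposInt) : ∃ r : ℕ, 0 < r ∧ q.val = (r : ℚ) := by
  obtain ⟨m, hm⟩ := hq
  refine ⟨m, ?_, hm⟩
  by_contra h
  have : m = 0 := by omega
  subst this
  have := q.2
  rw [show (q : {q : ℚ // 0 < q}).1 = QPos.val q from rfl, hm] at this
  simp at this

section extract

variable (uθ : OnePoint NStar → ℤ → OnePoint NStar)
    (huθ : ∀ x : OnePoint NStar, ∀ g ∈ QsetZ Pint thetaN x, ∀ a ∈ Pint, ∀ b ∈ Pint,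
      g = a - b → thetaN a x = thetaN b (uθ x g))
    (uρ : OnePoint NStar → QPos → OnePoint NStar)
    (huρ : ∀ x : OnePoint NStar, ∀ h ∈ Qset PposInt rhoN x, ∀ a ∈ PposInt, ∀ b ∈ PposInt,
      h = a * b⁻¹ → rhoN a x = rhoN b (uρ x h))

include huθ in
lemma utheta_eq (n : NStar) (g : ℤ) (hg : g ∈ QsetZ Pint thetaN (OnePoint.some n)) :
    ∃ k : NStar, (k.1 : ℤ) = (n.1 : ℤ) + g ∧ uθ (OnePoint.some n) g = OnePoint.some k := by
  obtain ⟨a, ha, b, hb, y, hgab, hy⟩ := hg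
  have H := huθ _ g ⟨a, ha, b, hb, y, hgab, hy⟩ a ha b hb hgab
  have ha' : a = ((a.toNat : ℕ) : ℤ) := (Int.toNat_of_nonneg ha).symm
  have hb' : b = ((b.toNat : ℕ) : ℤ) := (Int.toNat_of_nonneg hb).symm
  rw [ha', thetaN_some] at H
  rcases hY : uθ (OnePoint.some n) g with _ | k
  · have hY' : uθ (OnePoint.some n) g = OnePoint.infty := hY
    rw [hY', thetaN_infty] at H
    exact absurd H (Option.some_ne_none _)
  · have hY' : uθ (OnePoint.some n) g = OnePoint.some k := hY
    rw [hY', hb', thetaN_some] at H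
    have : n.1 + a.toNat = k.1 + b.toNat := congrArg Subtype.val (Option.some_inj.mp H)
    exact ⟨k, by omega, rfl⟩

include huθ in
lemma utheta_infty (g : ℤ) (hg : g ∈ QsetZ Pint thetaN OnePoint.infty) :
    uθ OnePoint.infty g = OnePoint.infty := by
  obtain ⟨a, ha, b, hb, y, hgab, hy⟩ := hg
  have H := huθ _ g ⟨a, ha, b, hb, y, hgab, hy⟩ a ha b hb hgab
  rw [thetaN_infty] at H
  rcases hY : uθ OnePoint.infty g with _ | k
  · rfl
  · have hY' : uθ OnePoint.infty g = OnePoint.some k := hY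
    rw [hY'] at H
    exact absurd H.symm (thetaN_some_ne _ _)

include huρ in
lemma urho_eq (n : NStar) (q : QPos) (hq : q ∈ Qset PposInt rhoN (OnePoint.some n)) :
    ∃ k : NStar, q.val * (n.1 : ℚ) = (k.1 : ℚ) ∧
      uρ (OnePoint.some n) q = OnePoint.some k := by
  obtain ⟨a, ha, b, hb, y, hgab, hy⟩ := hq
  have H := huρ _ q ⟨a, ha, b, hb, y, hgab, hy⟩ a ha b hb hgab
  obtain ⟨A, hA, hAv⟩ := memPposInt a ha
  obtain ⟨B, hB, hBv⟩ := memPposInt b hb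
  rw [rhoN_some A hA a hAv] at H
  rcases hY : uρ (OnePoint.some n) q with _ | k
  · have hY' : uρ (OnePoint.some n) q = OnePoint.infty := hY
    rw [hY', rhoN_infty] at H
    exact absurd H (Option.some_ne_none _)
  · have hY' : uρ (OnePoint.some n) q = OnePoint.some k := hY
    rw [hY', rhoN_some B hB b hBv] at H
    have hk : A * n.1 = B * k.1 := congrArg Subtype.val (Option.some_inj.mp H)
    refine ⟨k, ?_, rfl⟩
    have hqv : q.val = a.val * (b.val)⁻¹ := by rw [hgab]; rfl
    rw [hqv, hAv, hBv]
    have hB0 : ((B : ℚ)) ≠ 0 := by positivity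
    field_simp
    have : A * n.1 = k.1 * B := hk.trans (Nat.mul_comm B k.1)
    exact_mod_cast hk

include huρ in
lemma urho_infty (q : QPos) (hq : q ∈ Qset PposInt rhoN OnePoint.infty) :
    uρ OnePoint.infty q = OnePoint.infty := by
  obtain ⟨a, ha, b, hb, y, hgab, hy⟩ := hq
  have H := huρ _ q ⟨a, ha, b, hb, y, hgab, hy⟩ a ha b hb hgab
  rw [rhoN_infty] at H
  rcases hY : uρ OnePoint.infty q with _ | k
  · rfl
  · have hY' : uρ OnePoint.infty q = OnePoint.some k := hY
    rw [hY'] at H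
    exact absurd H.symm (rhoN_some_ne _ _)

end extract

/-- membership lemmas -/
lemma mem_QsetZ_some (n m : NStar) :
    ((m.1 : ℤ) - (n.1 : ℤ)) ∈ QsetZ Pint thetaN (OnePoint.some n) := by
  refine ⟨(m.1 : ℤ), Int.natCast_nonneg _, (n.1 : ℤ), Int.natCast_nonneg _,
    OnePoint.some m, rfl, ?_⟩
  rw [thetaN_some, thetaN_some]
  exact congrArg OnePoint.some (Subtype.ext (Nat.add_comm _ _))

lemma mem_QsetZ_zero_infty : (0 : ℤ) ∈ QsetZ Pint thetaN OnePoint.infty :=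
  ⟨0, Set.mem_setOf.mpr (le_refl 0), 0, Set.mem_setOf.mpr (le_refl 0), OnePoint.infty, by ring, rfl⟩

def natQPos (r : ℕ) (hr : 0 < r) : QPos := ⟨(r : ℚ), by positivity⟩

lemma natQPos_mem (r : ℕ) (hr : 0 < r) : natQPos r hr ∈ PposInt := ⟨r, rfl⟩

lemma one_mem_PposInt : (1 : QPos) ∈ PposInt := ⟨1, by norm_num [QPos.val]; rfl⟩

lemma mem_Qset_rho_some (r : ℕ) (hr : 0 < r) (m : NStar) :
    natQPos r hr ∈ Qset PposInt rhoN (OnePoint.some m) := by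
  refine ⟨natQPos r hr, natQPos_mem r hr, 1, one_mem_PposInt,
    OnePoint.some ⟨r * m.1, Nat.mul_pos hr m.2⟩, by rw [inv_one, mul_one], ?_⟩
  rw [rhoN_some r hr (natQPos r hr) rfl, rhoN_some 1 one_pos 1 (by norm_num [QPos.val]; rfl)]
  exact congrArg OnePoint.some (Subtype.ext (Nat.one_mul _).symm)

lemma mem_Qset_rho_infty (r : ℕ) (hr : 0 < r) :
    natQPos r hr ∈ Qset PposInt rhoN OnePoint.infty :=
  ⟨natQPos r hr, natQPos_mem r hr, 1, one_mem_PposInt, OnePoint.infty,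
    by rw [inv_one, mul_one], rfl⟩

lemma mem_Qset_div (n m : NStar) :
    (natQPos m.1 m.2) * (natQPos n.1 n.2)⁻¹ ∈ Qset PposInt rhoN (OnePoint.some n) := by
  refine ⟨natQPos m.1 m.2, natQPos_mem _ _, natQPos n.1 n.2, natQPos_mem _ _,
    OnePoint.some m, rfl, ?_⟩
  rw [rhoN_some m.1 m.2 (natQPos m.1 m.2) rfl, rhoN_some n.1 n.2 (natQPos n.1 n.2) rfl]
  exact congrArg OnePoint.some (Subtype.ext (Nat.mul_comm _ _))

section orbits
variable (uθ : OnePoint NStar → ℤ → OnePoint NStar)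
    (huθ : ∀ x : OnePoint NStar, ∀ g ∈ QsetZ Pint thetaN x, ∀ a ∈ Pint, ∀ b ∈ Pint,
      g = a - b → thetaN a x = thetaN b (uθ x g))
    (uρ : OnePoint NStar → QPos → OnePoint NStar)
    (huρ : ∀ x : OnePoint NStar, ∀ h ∈ Qset PposInt rhoN x, ∀ a ∈ PposInt, ∀ b ∈ PposInt,
      h = a * b⁻¹ → rhoN a x = rhoN b (uρ x h))

include huθ in
lemma orbit_theta_some (n : NStar) :
    {y | ∃ g ∈ QsetZ Pint thetaN (OnePoint.some n), y = uθ (OnePoint.some n) g}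
      = Set.range (OnePoint.some : NStar → OnePoint NStar) := by
  ext y
  constructor
  · rintro ⟨g, hg, rfl⟩
    obtain ⟨k, -, hk⟩ := utheta_eq uθ huθ n g hg
    exact ⟨k, hk.symm⟩
  · rintro ⟨m, rfl⟩
    refine ⟨(m.1 : ℤ) - (n.1 : ℤ), mem_QsetZ_some n m, ?_⟩
    obtain ⟨k, hk1, hk2⟩ := utheta_eq uθ huθ n _ (mem_QsetZ_some n m)
    rw [hk2]
    exact congrArg OnePoint.some (Subtype.ext (by omega))

include huθ in
lemma orbit_theta_infty :
    {y | ∃ g ∈ QsetZ Pint thetaN OnePoint.infty, y = uθ OnePoint.infty g}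
      = {OnePoint.infty} := by
  ext y
  constructor
  · rintro ⟨g, hg, rfl⟩
    exact utheta_infty uθ huθ g hg
  · rintro rfl
    exact ⟨0, mem_QsetZ_zero_infty, (utheta_infty uθ huθ 0 mem_QsetZ_zero_infty).symm⟩

include huρ in
lemma orbit_rho_some (n : NStar) :
    {y | ∃ h ∈ Qset PposInt rhoN (OnePoint.some n), y = uρ (OnePoint.some n) h}
      = Set.range (OnePoint.some : NStar → OnePoint NStar) := by
  ext y
  constructor
  · rintro ⟨q, hq, rfl⟩
    obtain ⟨k, -, hk⟩ := urho_eq uρ huρ n q hq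
    exact ⟨k, hk.symm⟩
  · rintro ⟨m, rfl⟩
    refine ⟨natQPos m.1 m.2 * (natQPos n.1 n.2)⁻¹, mem_Qset_div n m, ?_⟩
    obtain ⟨k, hk1, hk2⟩ := urho_eq uρ huρ n _ (mem_Qset_div n m)
    rw [hk2]
    refine congrArg OnePoint.some (Subtype.ext ?_)
    have hval : (natQPos m.1 m.2 * (natQPos n.1 n.2)⁻¹).val = (m.1 : ℚ) * (n.1 : ℚ)⁻¹ := rfl
    rw [hval] at hk1
    have hn0 : ((n.1 : ℚ)) ≠ 0 := by exact_mod_cast n.2.ne'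
    field_simp at hk1
    exact_mod_cast hk1

include huρ in
lemma orbit_rho_infty :
    {y | ∃ h ∈ Qset PposInt rhoN OnePoint.infty, y = uρ OnePoint.infty h}
      = {OnePoint.infty} := by
  ext y
  constructor
  · rintro ⟨q, hq, rfl⟩
    exact urho_infty uρ huρ q hq
  · rintro rfl
    exact ⟨natQPos 1 one_pos, mem_Qset_rho_infty 1 one_pos,
      (urho_infty uρ huρ _ (mem_Qset_rho_infty 1 one_pos)).symm⟩

end orbits

lemma cofinite_of_isOpen_infty {V : Set (OnePoint NStar)} (hV : IsOpen V)
    (hinf : OnePoint.infty ∈ V) :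
    ∃ M : ℕ, ∀ m : NStar, M ≤ m.1 → OnePoint.some m ∈ V := by
  rw [OnePoint.isOpen_iff_of_mem hinf] at hV
  have hfin : ((OnePoint.some ⁻¹' V)ᶜ : Set NStar).Finite := hV.2.finite_of_discrete
  have hfin2 : (Subtype.val '' ((OnePoint.some ⁻¹' V)ᶜ : Set NStar)).Finite :=
    hfin.image _
  obtain ⟨M, hM⟩ := hfin2.bddAbove
  refine ⟨M + 1, fun m hm => ?_⟩
  by_contra hmem
  have : m.1 ∈ Subtype.val '' ((OnePoint.some ⁻¹' V)ᶜ : Set NStar) :=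
    ⟨m, hmem, rfl⟩
  exact absurd (hM this) (by omega)

lemma eventually_const_of_continuous
    (bmap : {q : OnePoint NStar × QPos // q.2 ∈ Qset PposInt rhoN q.1} → ℤ)
    (hb : Continuous bmap) (r : ℕ) (hr : 0 < r) :
    ∃ M : ℕ, ∃ d : ℤ, ∀ m : NStar, M ≤ m.1 →
      bmap ⟨(OnePoint.some m, natQPos r hr), mem_Qset_rho_some r hr m⟩ = d := by
  set pinf : {q : OnePoint NStar × QPos // q.2 ∈ Qset PposInt rhoN q.1} :=
    ⟨(OnePoint.infty, natQPos r hr), mem_Qset_rho_infty r hr⟩ with hp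
  set d := bmap pinf with hd
  have hopen : IsOpen (bmap ⁻¹' {d}) := (isOpen_discrete {d}).preimage hb
  obtain ⟨U, hU, hUeq⟩ := isOpen_induced_iff.mp hopen
  have hdmem : (OnePoint.infty, natQPos r hr) ∈ U := by
    have : pinf ∈ bmap ⁻¹' {d} := rfl
    rw [← hUeq] at this
    exact this
  obtain ⟨V, W, hVopen, hWopen, hV, hW, hVW⟩ := isOpen_prod_iff.mp hU _ _ hdmem
  obtain ⟨M, hM⟩ := cofinite_of_isOpen_infty hVopen hV
  refine ⟨M, d, fun m hm => ?_⟩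
  have : ((OnePoint.some m, natQPos r hr) : OnePoint NStar × QPos) ∈ U :=
    hVW ⟨hM m hm, hW⟩
  have : (⟨(OnePoint.some m, natQPos r hr), mem_Qset_rho_some r hr m⟩ :
      {q : OnePoint NStar × QPos // q.2 ∈ Qset PposInt rhoN q.1}) ∈ bmap ⁻¹' {d} := by
    rw [← hUeq]; exact this
  exact this

section coe
variable (uθ : OnePoint NStar → ℤ → OnePoint NStar)
    (huθ : ∀ x : OnePoint NStar, ∀ g ∈ QsetZ Pint thetaN x, ∀ a ∈ Pint, ∀ b ∈ Pint,
      g = a - b → thetaN a x = thetaN b (uθ x g))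
    (uρ : OnePoint NStar → QPos → OnePoint NStar)
    (huρ : ∀ x : OnePoint NStar, ∀ h ∈ Qset PposInt rhoN x, ∀ a ∈ PposInt, ∀ b ∈ PposInt,
      h = a * b⁻¹ → rhoN a x = rhoN b (uρ x h))

include huρ in
lemma urho_natQPos (r : ℕ) (hr : 0 < r) (m : NStar) :
    uρ (OnePoint.some m) (natQPos r hr) = OnePoint.some ⟨r * m.1, Nat.mul_pos hr m.2⟩ := by
  obtain ⟨k, hk1, hk2⟩ := urho_eq uρ huρ m _ (mem_Qset_rho_some r hr m)
  rw [hk2]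
  refine congrArg OnePoint.some (Subtype.ext ?_)
  have hk1' : (r : ℚ) * (m.1 : ℚ) = (k.1 : ℚ) := hk1
  exact_mod_cast hk1'.symm

include huθ huρ in
lemma not_coe (φ : OnePoint NStar ≃ₜ OnePoint NStar)
    (bmap : {q : OnePoint NStar × QPos // q.2 ∈ Qset PposInt rhoN q.1} → ℤ)
    (hbcont : Continuous bmap)
    (hB : ∀ q : {q : OnePoint NStar × QPos // q.2 ∈ Qset PposInt rhoN q.1},
      bmap q ∈ QsetZ Pint thetaN (φ.symm q.1.1) ∧
      φ.symm (uρ q.1.1 q.1.2) = uθ (φ.symm q.1.1) (bmap q)) : False := by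
  classical
  -- the point of the groupoid over (m, r)
  set pt : ∀ (r : ℕ) (hr : 0 < r) (m : NStar),
      {q : OnePoint NStar × QPos // q.2 ∈ Qset PposInt rhoN q.1} :=
    fun r hr m => ⟨(OnePoint.some m, natQPos r hr), mem_Qset_rho_some r hr m⟩ with hpt
  -- φ.symm maps finite points to finite points
  have hfin : ∀ m : NStar, φ.symm (OnePoint.some m) ≠ OnePoint.infty := by
    intro m hcon
    obtain ⟨hmem, heq⟩ := hB (pt 2 two_pos m)
    rw [urho_natQPos uρ huρ 2 two_pos m] at heq
    have h1 : φ.symm (OnePoint.some ⟨2 * m.1, Nat.mul_pos two_pos m.2⟩)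
        = OnePoint.infty := by
      rw [heq]
      have : (bmap (pt 2 two_pos m)) ∈ QsetZ Pint thetaN OnePoint.infty := by
        rw [← hcon]; exact hmem
      rw [show (pt 2 two_pos m).1.1 = OnePoint.some m from rfl] at *
      rw [hcon]
      exact utheta_infty uθ huθ _ this
    have h2 := φ.symm.injective (h1.trans hcon.symm)
    have := congrArg Subtype.val (Option.some_inj.mp h2)
    simp at this
    omega
  -- extract the restriction g of φ.symm to NStar
  have hex : ∀ m : NStar, ∃ k : NStar, φ.symm (OnePoint.some m) = OnePoint.some k := by
    intro m
    rcases hc : φ.symm (OnePoint.some m) with _ | k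
    · exact absurd hc (hfin m)
    · exact ⟨k, rfl⟩
  choose g hg using hex
  have gInj : ∀ m m' : NStar, g m = g m' → m = m' := by
    intro m m' h
    have := φ.symm.injective ((hg m).trans (h ▸ (hg m').symm))
    exact Option.some_inj.mp this
  -- the cocycle identity
  have hcoc : ∀ (r : ℕ) (hr : 0 < r) (m : NStar),
      ((g ⟨r * m.1, Nat.mul_pos hr m.2⟩).1 : ℤ) = (g m).1 + bmap (pt r hr m) := by
    intro r hr m
    obtain ⟨hmem, heq⟩ := hB (pt r hr m)
    rw [show (pt r hr m).1.1 = OnePoint.some m from rfl] at hmem heq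
    rw [hg m] at hmem heq
    rw [show (pt r hr m).1.2 = natQPos r hr from rfl] at heq
    rw [urho_natQPos uρ huρ r hr m, hg ⟨r * m.1, Nat.mul_pos hr m.2⟩] at heq
    obtain ⟨k, hk1, hk2⟩ := utheta_eq uθ huθ (g m) _ hmem
    rw [hk2] at heq
    have := congrArg Subtype.val (Option.some_inj.mp heq)
    rw [← hk1]
    exact_mod_cast congrArg Nat.cast this
  -- eventual constancy plus cocycle
  have key : ∀ (r : ℕ) (hr : 0 < r), ∃ M : ℕ, 0 < M ∧ ∃ d : ℤ, ∀ m : NStar, M ≤ m.1 →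
      ((g ⟨r * m.1, Nat.mul_pos hr m.2⟩).1 : ℤ) = (g m).1 + d := by
    intro r hr
    obtain ⟨M, d, hMd⟩ := eventually_const_of_continuous bmap hbcont r hr
    exact ⟨M + 1, Nat.succ_pos _, d, fun m hm => by
      rw [hcoc r hr m, hMd m (by omega)]⟩
  -- pass to ℕ-valued function
  set G : ℕ → ℤ := fun m => if h : 0 < m then ((g ⟨m, h⟩).1 : ℤ) else 0 with hG
  have hGpos : ∀ m, 0 < m → 1 ≤ G m := by
    intro m hm
    rw [hG]
    simp only [dif_pos hm]
    exact_mod_cast (g ⟨m, hm⟩).2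
  have hGinj : ∀ m m', 0 < m → 0 < m' → G m = G m' → m = m' := by
    intro m m' hm hm' h
    rw [hG] at h
    simp only [dif_pos hm, dif_pos hm'] at h
    have := gInj ⟨m, hm⟩ ⟨m', hm'⟩ (Subtype.ext (by exact_mod_cast h))
    exact congrArg Subtype.val this
  have keyG : ∀ (r : ℕ) (hr : 0 < r), ∃ M : ℕ, 0 < M ∧ ∃ d : ℤ, ∀ m : ℕ, M ≤ m →
      G (r * m) = G m + d := by
    intro r hr
    obtain ⟨M, hM0, d, hMd⟩ := key r hr
    refine ⟨M, hM0, d, fun m hm => ?_⟩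
    have hm0 : 0 < m := lt_of_lt_of_le hM0 hm
    have := hMd ⟨m, hm0⟩ hm
    rw [hG]
    simp only [dif_pos hm0, dif_pos (Nat.mul_pos hr hm0)]
    exact this
  -- iterated cocycle
  have iter : ∀ (r : ℕ) (hr : 0 < r) (M : ℕ) (hM : 0 < M) (d : ℤ)
      (hMd : ∀ m : ℕ, M ≤ m → G (r * m) = G m + d),
      ∀ (j m : ℕ), M ≤ m → G (r ^ j * m) = G m + j * d := by
    intro r hr M hM d hMd j
    induction j with
    | zero => intro m hm; simp
    | succ j ih =>
      intro m hm
      have h1 : r ^ (j + 1) * m = r * (r ^ j * m) := by ring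
      have h2 : M ≤ r ^ j * m := le_trans hm (Nat.le_mul_of_pos_left m (Nat.pow_pos (n := j) hr))
      rw [h1, hMd _ h2, ih m hm]
      push_cast
      ring
  -- d ≥ 1
  have dpos : ∀ (r : ℕ) (hr : 2 ≤ r) (M : ℕ) (hM : 0 < M) (d : ℤ)
      (hMd : ∀ m : ℕ, M ≤ m → G (r * m) = G m + d), 1 ≤ d := by
    intro r hr M hM d hMd
    by_contra hd
    push_neg at hd
    rcases eq_or_lt_of_le (by omega : d ≤ 0) with hd0 | hdneg
    · have := hMd M le_rfl
      rw [hd0, add_zero] at this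
      have := hGinj _ _ (Nat.mul_pos (by omega) hM) hM this
      nlinarith [hM]
    · -- d ≤ -1 : take j large
      set j := (G M).toNat + 1 with hj
      have hiter := iter r (by omega) M hM d hMd j M le_rfl
      have hpos' : 1 ≤ G (r ^ j * M) :=
        hGpos _ (Nat.mul_pos (Nat.pow_pos (n := j) (by omega)) hM)
      have hGM : 1 ≤ G M := hGpos M hM
      have : (j : ℤ) * d ≤ -(j : ℤ) := by nlinarith [Int.toNat_of_nonneg (le_trans zero_le_one hGM)]
      omega
  -- final contradiction with r = 2, 3
  obtain ⟨M₂, hM₂, d₂, h₂⟩ := keyG 2 two_pos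
  obtain ⟨M₃, hM₃, d₃, h₃⟩ := keyG 3 three_pos
  have hd₂ : 1 ≤ d₂ := dpos 2 le_rfl M₂ hM₂ d₂ h₂
  have hd₃ : 1 ≤ d₃ := dpos 3 (by omega) M₃ hM₃ d₃ h₃
  set m₀ := max M₂ M₃ with hm₀
  have hm₀2 : M₂ ≤ m₀ := le_max_left _ _
  have hm₀3 : M₃ ≤ m₀ := le_max_right _ _
  have hm₀pos : 0 < m₀ := lt_of_lt_of_le hM₂ hm₀2
  have e₂ := iter 2 two_pos M₂ hM₂ d₂ h₂ d₃.toNat m₀ hm₀2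
  have e₃ := iter 3 three_pos M₃ hM₃ d₃ h₃ d₂.toNat m₀ hm₀3
  have heq : G (2 ^ d₃.toNat * m₀) = G (3 ^ d₂.toNat * m₀) := by
    rw [e₂, e₃]
    have : (d₃.toNat : ℤ) = d₃ := Int.toNat_of_nonneg (by omega)
    have h2' : (d₂.toNat : ℤ) = d₂ := Int.toNat_of_nonneg (by omega)
    rw [this, h2']
    ring
  have := hGinj _ _ (Nat.mul_pos (Nat.pow_pos two_pos) hm₀pos)
    (Nat.mul_pos (Nat.pow_pos three_pos) hm₀pos) heq
  have hpow : 2 ^ d₃.toNat = 3 ^ d₂.toNat := Nat.eq_of_mul_eq_mul_right hm₀pos this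
  have hdvd : 2 ∣ 3 ^ d₂.toNat := by
    rw [← hpow]
    exact dvd_pow_self 2 (by omega)
  have := Nat.Prime.dvd_of_dvd_pow Nat.prime_two hdvd
  omega

end coe

lemma thetaN'_some (a n : ℕ) :
    thetaN' (a : ℤ) (OnePoint.some n) = OnePoint.some (n + a) := by
  show (if 0 ≤ ((n : ℤ) + (a : ℤ)) then OnePoint.some ((n : ℤ) + (a : ℤ)).toNat
    else OnePoint.some n) = _
  rw [if_pos (by positivity)]
  exact congrArg OnePoint.some (by omega)

lemma thetaN'_some_ne (g : ℤ) (n : ℕ) : thetaN' g (OnePoint.some n) ≠ OnePoint.infty := by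
  show ite _ _ _ ≠ _
  split <;> exact fun h => Option.some_ne_none _ h

lemma rhoN'_some (r : ℕ) (hr : 0 < r) (q : QPos) (hq : q.val = (r : ℚ)) (n : ℕ) :
    rhoN' q (OnePoint.some n) = OnePoint.some (r * n) := by
  show ite _ _ _ = _
  have key : q.val * (n : ℚ) = ((r * n : ℕ) : ℚ) := by rw [hq]; push_cast; ring
  rw [if_pos (by rw [key, Rat.den_natCast, Rat.num_natCast]; exact ⟨rfl, Int.natCast_nonneg _⟩)]
  refine congrArg OnePoint.some ?_
  rw [key, Rat.num_natCast]
  exact Int.toNat_natCast _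

lemma rhoN'_some_ne (q : QPos) (n : ℕ) : rhoN' q (OnePoint.some n) ≠ OnePoint.infty := by
  show ite _ _ _ ≠ _
  split <;> exact fun h => Option.some_ne_none _ h

lemma mem_QsetZ'_some (n m : ℕ) :
    ((m : ℤ) - (n : ℤ)) ∈ QsetZ Pint thetaN' (OnePoint.some n) := by
  refine ⟨(m : ℤ), Int.natCast_nonneg _, (n : ℤ), Int.natCast_nonneg _,
    OnePoint.some m, rfl, ?_⟩
  rw [thetaN'_some, thetaN'_some]
  exact congrArg OnePoint.some (Nat.add_comm _ _)

section primed
variable (uθ' : OnePoint ℕ → ℤ → OnePoint ℕ)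
    (huθ' : ∀ x : OnePoint ℕ, ∀ g ∈ QsetZ Pint thetaN' x, ∀ a ∈ Pint, ∀ b ∈ Pint,
      g = a - b → thetaN' a x = thetaN' b (uθ' x g))
    (uρ' : OnePoint ℕ → QPos → OnePoint ℕ)
    (huρ' : ∀ y : OnePoint ℕ, ∀ h ∈ Qset PposInt rhoN' y, ∀ a ∈ PposInt, ∀ b ∈ PposInt,
      h = a * b⁻¹ → rhoN' a y = rhoN' b (uρ' y h))

include huθ' in
lemma utheta'_eq (n : ℕ) (g : ℤ) (hg : g ∈ QsetZ Pint thetaN' (OnePoint.some n)) :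
    ∃ k : ℕ, (k : ℤ) = (n : ℤ) + g ∧ uθ' (OnePoint.some n) g = OnePoint.some k := by
  obtain ⟨a, ha, b, hb, y, hgab, hy⟩ := hg
  have H := huθ' _ g ⟨a, ha, b, hb, y, hgab, hy⟩ a ha b hb hgab
  have ha' : a = ((a.toNat : ℕ) : ℤ) := (Int.toNat_of_nonneg ha).symm
  have hb' : b = ((b.toNat : ℕ) : ℤ) := (Int.toNat_of_nonneg hb).symm
  rw [ha', thetaN'_some] at H
  rcases hY : uθ' (OnePoint.some n) g with _ | k
  · have hY' : uθ' (OnePoint.some n) g = OnePoint.infty := hY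
    rw [hY'] at H
    exact absurd H (Option.some_ne_none _)
  · have hY' : uθ' (OnePoint.some n) g = OnePoint.some k := hY
    rw [hY', hb', thetaN'_some] at H
    have : n + a.toNat = k + b.toNat := Option.some_inj.mp H
    exact ⟨k, by omega, rfl⟩

include huθ' in
lemma orbit_theta'_some (n : ℕ) :
    {y | ∃ g ∈ QsetZ Pint thetaN' (OnePoint.some n), y = uθ' (OnePoint.some n) g}
      = Set.range (OnePoint.some : ℕ → OnePoint ℕ) := by
  ext y
  constructor
  · rintro ⟨g, hg, rfl⟩
    obtain ⟨k, -, hk⟩ := utheta'_eq uθ' huθ' n g hg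
    exact ⟨k, hk.symm⟩
  · rintro ⟨m, rfl⟩
    refine ⟨(m : ℤ) - (n : ℤ), mem_QsetZ'_some n m, ?_⟩
    obtain ⟨k, hk1, hk2⟩ := utheta'_eq uθ' huθ' n _ (mem_QsetZ'_some n m)
    rw [hk2]
    exact congrArg OnePoint.some (by omega)

include huρ' in
lemma urho'_eq (n : ℕ) (q : QPos) (hq : q ∈ Qset PposInt rhoN' (OnePoint.some n)) :
    ∃ k : ℕ, q.val * (n : ℚ) = (k : ℚ) ∧
      uρ' (OnePoint.some n) q = OnePoint.some k := by
  obtain ⟨a, ha, b, hb, y, hgab, hy⟩ := hq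
  have H := huρ' _ q ⟨a, ha, b, hb, y, hgab, hy⟩ a ha b hb hgab
  obtain ⟨A, hA, hAv⟩ := memPposInt a ha
  obtain ⟨B, hB, hBv⟩ := memPposInt b hb
  rw [rhoN'_some A hA a hAv] at H
  rcases hY : uρ' (OnePoint.some n) q with _ | k
  · have hY' : uρ' (OnePoint.some n) q = OnePoint.infty := hY
    rw [hY'] at H
    exact absurd H (Option.some_ne_none _)
  · have hY' : uρ' (OnePoint.some n) q = OnePoint.some k := hY
    rw [hY', rhoN'_some B hB b hBv] at H
    have hk : A * n = B * k := Option.some_inj.mp H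
    refine ⟨k, ?_, rfl⟩
    have hqv : q.val = a.val * (b.val)⁻¹ := by rw [hgab]; rfl
    rw [hqv, hAv, hBv]
    have hB0 : ((B : ℚ)) ≠ 0 := by positivity
    field_simp
    have : A * n = k * B := hk.trans (Nat.mul_comm B k)
    exact_mod_cast hk

include huρ' in
lemma urho'_infty (q : QPos) (hq : q ∈ Qset PposInt rhoN' OnePoint.infty) :
    uρ' OnePoint.infty q = OnePoint.infty := by
  obtain ⟨a, ha, b, hb, y, hgab, hy⟩ := hq
  have H := huρ' _ q ⟨a, ha, b, hb, y, hgab, hy⟩ a ha b hb hgab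
  rcases hY : uρ' OnePoint.infty q with _ | k
  · rfl
  · have hY' : uρ' OnePoint.infty q = OnePoint.some k := hY
    rw [hY'] at H
    exact absurd H.symm (rhoN'_some_ne _ _)

end primed

section primed2
variable (uθ' : OnePoint ℕ → ℤ → OnePoint ℕ)
    (huθ' : ∀ x : OnePoint ℕ, ∀ g ∈ QsetZ Pint thetaN' x, ∀ a ∈ Pint, ∀ b ∈ Pint,
      g = a - b → thetaN' a x = thetaN' b (uθ' x g))
    (uρ' : OnePoint ℕ → QPos → OnePoint ℕ)
    (huρ' : ∀ y : OnePoint ℕ, ∀ h ∈ Qset PposInt rhoN' y, ∀ a ∈ PposInt, ∀ b ∈ PposInt,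
      h = a * b⁻¹ → rhoN' a y = rhoN' b (uρ' y h))

include huθ' huρ' in
lemma not_oe' (φ : OnePoint ℕ ≃ₜ OnePoint ℕ)
    (hφ : ∀ x : OnePoint ℕ, φ '' {y | ∃ g ∈ QsetZ Pint thetaN' x, y = uθ' x g}
      = {y | ∃ h ∈ Qset PposInt rhoN' (φ x), y = uρ' (φ x) h}) : False := by
  have h0 := hφ (OnePoint.some 0)
  rw [orbit_theta'_some uθ' huθ' 0] at h0
  have h1mem : φ (OnePoint.some 1) ∈ φ '' Set.range (OnePoint.some : ℕ → OnePoint ℕ) :=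
    ⟨OnePoint.some 1, ⟨1, rfl⟩, rfl⟩
  rcases hc : φ (OnePoint.some 0) with _ | n
  · -- φ (some 0) = ∞
    have hc' : φ (OnePoint.some 0) = OnePoint.infty := hc
    rw [hc'] at h0
    rw [h0] at h1mem
    obtain ⟨q, hq, hy⟩ := h1mem
    have hinf : φ (OnePoint.some 1) = OnePoint.infty :=
      hy.trans (urho'_infty uρ' huρ' q hq)
    have := φ.injective (hinf.trans hc'.symm)
    exact absurd (Option.some_inj.mp this) one_ne_zero
  · rcases n with _ | n
    · -- φ (some 0) = some 0
      have hc' : φ (OnePoint.some 0) = OnePoint.some 0 := hc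
      rw [hc'] at h0
      rw [h0] at h1mem
      obtain ⟨q, hq, hy⟩ := h1mem
      obtain ⟨k, hk1, hk2⟩ := urho'_eq uρ' huρ' 0 q hq
      have hk0 : (k : ℚ) = 0 := by rw [← hk1]; push_cast; ring
      have hk0' : k = 0 := by exact_mod_cast hk0
      subst hk0'
      have : φ (OnePoint.some 1) = OnePoint.some 0 := hy.trans hk2
      have := φ.injective (this.trans hc'.symm)
      exact absurd (Option.some_inj.mp this) one_ne_zero
    · -- φ (some 0) = some (n+1)
      have hc' : φ (OnePoint.some 0) = OnePoint.some (n + 1) := hc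
      rw [hc'] at h0
      have hpos : ∀ y ∈ {y | ∃ h ∈ Qset PposInt rhoN' (OnePoint.some (n + 1)),
          y = uρ' (OnePoint.some (n + 1)) h}, ∃ k : ℕ, 0 < k ∧ y = OnePoint.some k := by
        rintro y ⟨q, hq, rfl⟩
        obtain ⟨k, hk1, hk2⟩ := urho'_eq uρ' huρ' (n + 1) q hq
        refine ⟨k, ?_, hk2⟩
        have hq0 : (0 : ℚ) < q.val := q.2
        have : (0 : ℚ) < (k : ℚ) := by
          rw [← hk1]
          positivity
        exact_mod_cast this
      obtain ⟨z, hz⟩ := φ.surjective (OnePoint.some 0)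
      rcases z with _ | t
      · obtain ⟨z', hz'⟩ := φ.surjective OnePoint.infty
        rcases z' with _ | t'
        · have hz2 : φ OnePoint.infty = OnePoint.some 0 := hz
          have hz2' : φ OnePoint.infty = OnePoint.infty := hz'
          exact Option.some_ne_none _ (hz2.symm.trans hz2')
        · have hmem : OnePoint.infty ∈ φ '' Set.range (OnePoint.some : ℕ → OnePoint ℕ) :=
            ⟨OnePoint.some t', ⟨t', rfl⟩, hz'⟩
          rw [h0] at hmem
          obtain ⟨k, -, hk⟩ := hpos _ hmem
          exact Option.some_ne_none _ hk.symm
      · have hmem : OnePoint.some 0 ∈ φ '' Set.range (OnePoint.some : ℕ → OnePoint ℕ) :=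
          ⟨OnePoint.some t, ⟨t, rfl⟩, hz⟩
        rw [h0] at hmem
        obtain ⟨k, hkpos, hk⟩ := hpos _ hmem
        have : (0 : ℕ) = k := Option.some_inj.mp hk
        omega

end primed2


/-- (i) the actions `ℕ ↷ ℕ*_∞` (translation) and `ℕ* ↷ ℕ*_∞`
(multiplication) are orbit equivalent — indeed the identity map implements an orbit
equivalence, the orbit of every `k ∈ ℕ*` being `ℕ*` and that of `∞` being `{∞}` for both
actions — but they are NOT continuously orbit equivalent.  (ii) The actions `ℕ ↷ ℕ_∞`
and `ℕ* ↷ ℕ_∞` are not orbit equivalent. -/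
theorem stmt_19
    (uθ : OnePoint NStar → ℤ → OnePoint NStar)
    (huθ : ∀ x : OnePoint NStar, ∀ g ∈ QsetZ Pint thetaN x, ∀ a ∈ Pint, ∀ b ∈ Pint,
      g = a - b → thetaN a x = thetaN b (uθ x g))
    (uρ : OnePoint NStar → QPos → OnePoint NStar)
    (huρ : ∀ x : OnePoint NStar, ∀ h ∈ Qset PposInt rhoN x, ∀ a ∈ PposInt, ∀ b ∈ PposInt,
      h = a * b⁻¹ → rhoN a x = rhoN b (uρ x h))
    (uθ' : OnePoint ℕ → ℤ → OnePoint ℕ)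
    (huθ' : ∀ x : OnePoint ℕ, ∀ g ∈ QsetZ Pint thetaN' x, ∀ a ∈ Pint, ∀ b ∈ Pint,
      g = a - b → thetaN' a x = thetaN' b (uθ' x g))
    (uρ' : OnePoint ℕ → QPos → OnePoint ℕ)
    (huρ' : ∀ x : OnePoint ℕ, ∀ h ∈ Qset PposInt rhoN' x, ∀ a ∈ PposInt, ∀ b ∈ PposInt,
      h = a * b⁻¹ → rhoN' a x = rhoN' b (uρ' x h)) :
    (∀ n : NStar,
      {y | ∃ g ∈ QsetZ Pint thetaN (OnePoint.some n), y = uθ (OnePoint.some n) g}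
        = Set.range (OnePoint.some : NStar → OnePoint NStar) ∧
      {y | ∃ h ∈ Qset PposInt rhoN (OnePoint.some n), y = uρ (OnePoint.some n) h}
        = Set.range (OnePoint.some : NStar → OnePoint NStar)) ∧
    ({y | ∃ g ∈ QsetZ Pint thetaN OnePoint.infty, y = uθ OnePoint.infty g}
        = {OnePoint.infty} ∧
     {y | ∃ h ∈ Qset PposInt rhoN OnePoint.infty, y = uρ OnePoint.infty h}
        = {OnePoint.infty}) ∧
    (∀ x : OnePoint NStar,
      {y | ∃ g ∈ QsetZ Pint thetaN x, y = uθ x g}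
        = {y | ∃ h ∈ Qset PposInt rhoN x, y = uρ x h}) ∧
    ¬ (∃ (φ : OnePoint NStar ≃ₜ OnePoint NStar)
        (a : {q : OnePoint NStar × ℤ // q.2 ∈ QsetZ Pint thetaN q.1} → QPos)
        (b : {q : OnePoint NStar × QPos // q.2 ∈ Qset PposInt rhoN q.1} → ℤ),
        Continuous a ∧ Continuous b ∧
        (∀ p : {q : OnePoint NStar × ℤ // q.2 ∈ QsetZ Pint thetaN q.1},
          a p ∈ Qset PposInt rhoN (φ p.1.1) ∧
          φ (uθ p.1.1 p.1.2) = uρ (φ p.1.1) (a p)) ∧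
        (∀ q : {q : OnePoint NStar × QPos // q.2 ∈ Qset PposInt rhoN q.1},
          b q ∈ QsetZ Pint thetaN (φ.symm q.1.1) ∧
          φ.symm (uρ q.1.1 q.1.2) = uθ (φ.symm q.1.1) (b q))) ∧
    ¬ (∃ φ : OnePoint ℕ ≃ₜ OnePoint ℕ, ∀ x : OnePoint ℕ,
        φ '' {y | ∃ g ∈ QsetZ Pint thetaN' x, y = uθ' x g}
          = {y | ∃ h ∈ Qset PposInt rhoN' (φ x), y = uρ' (φ x) h}) := by
  refine ⟨fun n => ⟨orbit_theta_some uθ huθ n, orbit_rho_some uρ huρ n⟩,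
    ⟨orbit_theta_infty uθ huθ, orbit_rho_infty uρ huρ⟩, ?_, ?_, ?_⟩
  · intro x
    rcases x with _ | n
    · exact (orbit_theta_infty uθ huθ).trans (orbit_rho_infty uρ huρ).symm
    · exact (orbit_theta_some uθ huθ n).trans (orbit_rho_some uρ huρ n).symm
  · rintro ⟨φ, a, bmap, hacont, hbcont, hA, hB⟩
    exact not_coe uθ huθ uρ huρ φ bmap hbcont hB
  · rintro ⟨φ, hφ⟩
    exact not_oe' uθ' huθ' uρ' huρ' φ hφ
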